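/- (Converse part of Takeuchi's observation.) Let k be a commutative ring, A a unital associative k-algebra and C a counital coassociative k-coalgebra. Suppose act' : (A ⊗ C) ⊗ A → A ⊗ C is a k-linear map satisfying, for all x ∈ A ⊗ C, a, b, a'' ∈ A, a' ∈ A, c ∈ C: (1) act'(x ⊗ 1) = x; (2) act'(act'(x ⊗ a) ⊗ b) = act'(x ⊗ ab); (3) act'((a''·x) ⊗ a) = a''·act'(x ⊗ a), where a''·(a' ⊗ c) := (a''a') ⊗ c; (4) (A ⊗ ε)(act'(x ⊗ a)) = ((A ⊗ ε)(x))·a; (5) (A ⊗ Δ)(act'((a' ⊗ c) ⊗ a)) = Σ act'((a' ⊗ c₍₁₎) ⊗ a_α) ⊗ c₍₂₎^α, where act'((1 ⊗ c₍₂₎) ⊗ a) = Σ a_α ⊗ c₍₂₎^α. Then the k-linear map ψ' : C ⊗ A → A ⊗ C defined by ψ'(c ⊗ a) := act'((1 ⊗ c) ⊗ a) is an entwining map, i.e. it satisfies (i) ψ' ∘ (C ⊗ μ) = (μ ⊗ C) ∘ (A ⊗ ψ') ∘ (ψ' ⊗ A); (ii) (A ⊗ Δ) ∘ ψ' = (ψ'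 ⊗ C) ∘ (C ⊗ ψ') ∘ (Δ ⊗ A); (iii) ψ'(c ⊗ 1) = 1 ⊗ c; (iv) (A ⊗ ε)(ψ'(c ⊗ a)) = ε(c)a. -/

import Mathlib

/-!
STATEMENT 2 (Converse part of Takeuchi's observation): if `act'` gives
`A ⊗ C` a unital associative right A-module structure commuting with left
multiplication, for which `A ⊗ ε` and `A ⊗ Δ` are right A-linear, then
`ψ'(c ⊗ a) := act'((1 ⊗ c) ⊗ a)` is an entwining map.
-/

open TensorProduct

noncomputable section

variable {k A C : Type*} [CommRing k] [Ring A] [Algebra k A]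
  [AddCommGroup C] [Module k C] [Coalgebra k C]

/-- The twisted right action associated to a map `ψ : C ⊗ A → A ⊗ C`:
`act((a' ⊗ c) ⊗ a) = (μ ⊗ C)(a' ⊗ ψ(c ⊗ a))`. -/
def act (ψ : C ⊗[k] A →ₗ[k] A ⊗[k] C) :
    (A ⊗[k] C) ⊗[k] A →ₗ[k] A ⊗[k] C :=
  LinearMap.rTensor C (LinearMap.mul' k A) ∘ₗ
    (TensorProduct.assoc k A A C).symm.toLinearMap ∘ₗ
    LinearMap.lTensor A ψ ∘ₗ
    (TensorProduct.assoc k A C A).toLinearMap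

/-- `(A ⊗ ε) : A ⊗ C → A` (composed with the canonical iso `A ⊗ k ≅ A`). -/
def epsA : A ⊗[k] C →ₗ[k] A :=
  (TensorProduct.rid k A).toLinearMap ∘ₗ
    LinearMap.lTensor A (Coalgebra.counit (R := k) (A := C))

/-- Left multiplication by `a` on the first tensor factor of `A ⊗ C`. -/
def lmul (a : A) : A ⊗[k] C →ₗ[k] A ⊗[k] C :=
  LinearMap.rTensor C (LinearMap.mulLeft k a)

/-- The map `ψ' : C ⊗ A → A ⊗ C`, `ψ'(c ⊗ a) = act'((1 ⊗ c) ⊗ a)`. -/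
def psi' (act' : (A ⊗[k] C) ⊗[k] A →ₗ[k] A ⊗[k] C) :
    C ⊗[k] A →ₗ[k] A ⊗[k] C :=
  act' ∘ₗ LinearMap.rTensor A (TensorProduct.mk k A C 1)


lemma psi'_apply (act' : (A ⊗[k] C) ⊗[k] A →ₗ[k] A ⊗[k] C) (c : C) (a : A) :
    psi' act' (c ⊗ₜ a) = act' (((1 : A) ⊗ₜ c) ⊗ₜ a) := rfl

lemma act_apply (ψ : C ⊗[k] A →ₗ[k] A ⊗[k] C) (a' : A) (c : C) (a : A) :
    act ψ ((a' ⊗ₜ c) ⊗ₜ a) = lmul a' (ψ (c ⊗ₜ a)) := by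
  simp only [act, LinearMap.comp_apply, LinearEquiv.coe_coe, TensorProduct.assoc_tmul,
    LinearMap.lTensor_tmul]
  induction ψ (c ⊗ₜ a) using TensorProduct.induction_on with
  | zero => simp [lmul]
  | tmul b c' => simp [lmul, LinearMap.mulLeft_apply]
  | add x y hx hy => simp only [TensorProduct.tmul_add, map_add, hx, hy]

theorem statement2 (act' : (A ⊗[k] C) ⊗[k] A →ₗ[k] A ⊗[k] C)
    -- (1) act'(x ⊗ 1) = x
    (h1 : ∀ x : A ⊗[k] C, act' (x ⊗ₜ (1 : A)) = x)
    -- (2) act'(act'(x ⊗ a) ⊗ b) = act'(x ⊗ ab)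
    (h2 : ∀ (x : A ⊗[k] C) (a b : A),
      act' (act' (x ⊗ₜ a) ⊗ₜ b) = act' (x ⊗ₜ (a * b)))
    -- (3) act'((a''·x) ⊗ a) = a''·act'(x ⊗ a)
    (h3 : ∀ (x : A ⊗[k] C) (a a'' : A),
      act' (lmul a'' x ⊗ₜ a) = lmul a'' (act' (x ⊗ₜ a)))
    -- (4) (A ⊗ ε)(act'(x ⊗ a)) = ((A ⊗ ε)(x))·a
    (h4 : ∀ (x : A ⊗[k] C) (a : A), epsA (act' (x ⊗ₜ a)) = epsA x * a)
    -- (5) (A ⊗ Δ)(act'((a' ⊗ c) ⊗ a)) = Σ act'((a' ⊗ c₍₁₎) ⊗ a_α) ⊗ c₍₂₎^α,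
    -- where act'((1 ⊗ c₍₂₎) ⊗ a) = Σ a_α ⊗ c₍₂₎^α
    (h5 : ∀ (a' : A) (c : C) (a : A),
      LinearMap.lTensor A (Coalgebra.comul (R := k) (A := C))
          (act' ((a' ⊗ₜ c) ⊗ₜ a)) =
        (TensorProduct.assoc k A C C)
          (LinearMap.rTensor C
            (act' ∘ₗ LinearMap.rTensor A (TensorProduct.mk k A C a'))
            ((TensorProduct.assoc k C A C).symm
              (LinearMap.lTensor C (psi' act')
                ((TensorProduct.assoc k C C A)
                  (LinearMap.rTensor A (Coalgebra.comul (R := k) (A := C))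
                    (c ⊗ₜ a))))))) :
    -- ψ' is an entwining map:
    -- (i) ψ' ∘ (C ⊗ μ) = (μ ⊗ C) ∘ (A ⊗ ψ') ∘ (ψ' ⊗ A)
    (∀ (c : C) (a b : A),
      psi' act' (c ⊗ₜ (a * b)) = act (psi' act') (psi' act' (c ⊗ₜ a) ⊗ₜ b)) ∧
    -- (ii) (A ⊗ Δ) ∘ ψ' = (ψ' ⊗ C) ∘ (C ⊗ ψ') ∘ (Δ ⊗ A)
    (LinearMap.lTensor A (Coalgebra.comul (R := k) (A := C)) ∘ₗ psi' act' =
      (TensorProduct.assoc k A C C).toLinearMap ∘ₗ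
        LinearMap.rTensor C (psi' act') ∘ₗ
        (TensorProduct.assoc k C A C).symm.toLinearMap ∘ₗ
        LinearMap.lTensor C (psi' act') ∘ₗ
        (TensorProduct.assoc k C C A).toLinearMap ∘ₗ
        LinearMap.rTensor A (Coalgebra.comul (R := k) (A := C))) ∧
    -- (iii) ψ'(c ⊗ 1) = 1 ⊗ c
    (∀ c : C, psi' act' (c ⊗ₜ (1 : A)) = (1 : A) ⊗ₜ c) ∧
    -- (iv) (A ⊗ ε)(ψ'(c ⊗ a)) = ε(c)a
    (∀ (c : C) (a : A),
      epsA (psi' act' (c ⊗ₜ a)) = Coalgebra.counit (R := k) c • a) := by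
  have key : ∀ x : A ⊗[k] C, ∀ b : A,
      act (psi' act') (x ⊗ₜ b) = act' (x ⊗ₜ b) := by
    intro x b
    induction x using TensorProduct.induction_on with
    | zero => simp
    | tmul a' c =>
      rw [act_apply, psi'_apply, ← h3, lmul, LinearMap.rTensor_tmul,
        LinearMap.mulLeft_apply, mul_one]
    | add x y hx hy =>
      have : (x + y) ⊗ₜ[k] b = x ⊗ₜ b + y ⊗ₜ b := TensorProduct.add_tmul x y b
      rw [this, map_add, map_add, hx, hy]
  refine ⟨?_, ?_, ?_, ?_⟩
  · intro c a b
    rw [key, psi'_apply, psi'_apply, ← h2]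
  · apply TensorProduct.ext'
    intro c a
    exact h5 1 c a
  · intro c
    rw [psi'_apply, h1]
  · intro c a
    rw [psi'_apply, h4]
    simp [epsA, Algebra.smul_def]
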